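/- Let n ≥ 4, p = p₀(n) = (n+1+√(n²+10n−7))/(2(n−1)), let R > 0 with 8R ≥ 1, and let C, ε > 0. Define a_j = 3·4^{j−1} − 1, C₀ = ( (p−1)C / ( 2^{n−1+(n+1)p/2} · 3^{np−1} · p ) )^{1/(p−1)}, C_p = 2^{(n+1)p} p, C₁ = C^{p+1} ε^{p²} / ( 2^{n−2} · 3^{(n−1)p/2} · ( n − (n−1)p/2 )^p ), C_j = exp{ p^{j−1} log( C₀ C₁ C_p^{−S(j)} ) − log C₀ } for j ≥ 2 where S(j) = Σ_{k=1}^{j−1} k/p^k, D = 3²·2^{3n−2−3(n−1)p/2}, K_j(t) = ( C_j / (16^j D) ) ( (1/2) log t )^{(p^j−1)/(p−1)}, I(j) = [ (2(a_j+2)R)², (2(a_{j+1}+2)R)² ], and E = 2 ( 2^{n−2}·3^{(n−1)p/2}·(n−(n−1)p/2)^p · e · C_p^{S(∞)} / (C₀ C^{p+1}) )^{(p−1)/p}, where S(∞) = Σ_{k=1}^{∞} k/p^k. Then for every integer j ≥ 2 and every t ∈ I(j) with ε^{p(p−1)} log t ≥ E, one has K_j(t) ≥ exp{ p^{j−1}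 − j log 16 − log(C₀D) − (1/(p−1)) log( log( 2(a_{j+1}+2)R ) ) }; consequently, for every K* > 0 there exists an integer J, depending only on n, p, R, C (and not on ε or t), such that K_j(t) ≥ K* for all j ≥ J and all t ∈ I(j) with ε^{p(p−1)} log t ≥ E. -/

import Mathlib

/-- `a_j = 3·4^{j-1} - 1`. -/
noncomputable def aseq (j : ℕ) : ℝ := 3 * 4 ^ (j - 1) - 1

/-- `C₀ = ((p-1)C / (2^{n-1+(n+1)p/2}·3^{np-1}·p))^{1/(p-1)}`. -/
noncomputable def Czero (n : ℕ) (p C : ℝ) : ℝ :=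
  ((p - 1) * C /
      ((2 : ℝ) ^ ((n : ℝ) - 1 + ((n : ℝ) + 1) * p / 2) * (3 : ℝ) ^ ((n : ℝ) * p - 1) * p)) ^
    (1 / (p - 1))

/-- `C_p = 2^{(n+1)p} p`. -/
noncomputable def Cpow (n : ℕ) (p : ℝ) : ℝ := (2 : ℝ) ^ (((n : ℝ) + 1) * p) * p

/-- `C₁ = C^{p+1} ε^{p²} / (2^{n-2}·3^{(n-1)p/2}·(n-(n-1)p/2)^p)`. -/
noncomputable def Cone (n : ℕ) (p C ε : ℝ) : ℝ :=
  C ^ (p + 1) * ε ^ (p ^ 2) /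
    ((2 : ℝ) ^ ((n : ℝ) - 2) * (3 : ℝ) ^ (((n : ℝ) - 1) * p / 2) *
      ((n : ℝ) - ((n : ℝ) - 1) * p / 2) ^ p)

/-- `S(j) = Σ_{k=1}^{j-1} k/p^k` (the `k = 0` term vanishes). -/
noncomputable def Ssum (p : ℝ) (j : ℕ) : ℝ := ∑ k ∈ Finset.range j, (k : ℝ) / p ^ k

/-- `S(∞) = Σ_{k=1}^{∞} k/p^k`. -/
noncomputable def Sinf (p : ℝ) : ℝ := ∑' k : ℕ, (k : ℝ) / p ^ k

/-- The iteration constants: `C_j = C₁` for `j = 1` and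
`C_j = exp{p^{j-1} log(C₀ C₁ C_p^{-S(j)}) - log C₀}` for `j ≥ 2`. -/
noncomputable def Cseq (n : ℕ) (p C ε : ℝ) (j : ℕ) : ℝ :=
  if j = 1 then Cone n p C ε
  else Real.exp (p ^ (j - 1) * Real.log (Czero n p C * Cone n p C ε * Cpow n p ^ (-Ssum p j))
    - Real.log (Czero n p C))

/-- `D = 3²·2^{3n-2-3(n-1)p/2}`. -/
noncomputable def Dconst (n : ℕ) (p : ℝ) : ℝ :=
  3 ^ 2 * (2 : ℝ) ^ (3 * (n : ℝ) - 2 - 3 * ((n : ℝ) - 1) * p / 2)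

/-- `K_j(t) = (C_j / (16^j D)) ((1/2) log t)^{(p^j-1)/(p-1)}`. -/
noncomputable def Kcoef (n : ℕ) (p C ε : ℝ) (j : ℕ) (t : ℝ) : ℝ :=
  Cseq n p C ε j / (16 ^ j * Dconst n p) * (1 / 2 * Real.log t) ^ ((p ^ j - 1) / (p - 1))

/-- `E = 2 (2^{n-2}·3^{(n-1)p/2}·(n-(n-1)p/2)^p · e · C_p^{S(∞)} / (C₀ C^{p+1}))^{(p-1)/p}`. -/
noncomputable def Econst (n : ℕ) (p C : ℝ) : ℝ :=
  2 * (((2 : ℝ) ^ ((n : ℝ) - 2) * (3 : ℝ) ^ (((n : ℝ) - 1) * p / 2) *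
      ((n : ℝ) - ((n : ℝ) - 1) * p / 2) ^ p * Real.exp 1 * Cpow n p ^ Sinf p) /
    (Czero n p C * C ^ (p + 1))) ^ ((p - 1) / p)

set_option maxHeartbeats 1000000 in
/-- **Blow-up of the coefficients `K_j(t)`** (the key quantitative step in the
proof of the main theorem). For `j ≥ 2` and `t ∈ I(j) = [(2(a_j+2)R)², (2(a_{j+1}+2)R)²]`
with `ε^{p(p-1)} log t ≥ E`, one has
`K_j(t) ≥ exp{p^{j-1} - j log 16 - log(C₀D) - (1/(p-1)) log(log(2(a_{j+1}+2)R))}`;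
consequently for every `K* > 0` there is `J` (depending only on `n, p, R, C`,
not on `ε` or `t`) with `K_j(t) ≥ K*` for all `j ≥ J` and all such `t`. -/
theorem Kcoef_blowup
    (n : ℕ) (hn : 4 ≤ n) (p R C : ℝ)
    (hp : p = ((n : ℝ) + 1 + Real.sqrt ((n : ℝ) ^ 2 + 10 * (n : ℝ) - 7)) / (2 * ((n : ℝ) - 1)))
    (hR : 0 < R) (h8R : 1 ≤ 8 * R) (hC : 0 < C) :
    (∀ ε : ℝ, 0 < ε → ∀ j : ℕ, 2 ≤ j → ∀ t : ℝ,
      (2 * (aseq j + 2) * R) ^ 2 ≤ t → t ≤ (2 * (aseq (j + 1) + 2) * R) ^ 2 →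
      Econst n p C ≤ ε ^ (p * (p - 1)) * Real.log t →
      Real.exp (p ^ (j - 1) - (j : ℝ) * Real.log 16 - Real.log (Czero n p C * Dconst n p)
          - 1 / (p - 1) * Real.log (Real.log (2 * (aseq (j + 1) + 2) * R)))
        ≤ Kcoef n p C ε j t) ∧
    (∀ Kstar : ℝ, 0 < Kstar → ∃ J : ℕ, ∀ ε : ℝ, 0 < ε → ∀ j : ℕ, J ≤ j → ∀ t : ℝ,
      (2 * (aseq j + 2) * R) ^ 2 ≤ t → t ≤ (2 * (aseq (j + 1) + 2) * R) ^ 2 →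
      Econst n p C ≤ ε ^ (p * (p - 1)) * Real.log t →
      Kstar ≤ Kcoef n p C ε j t) := by
  -- basic facts about p
  have hn' : (4:ℝ) ≤ (n:ℝ) := by exact_mod_cast hn
  have hyz : (0:ℝ) ≤ (n:ℝ)^2 + 10*(n:ℝ) - 7 := by nlinarith
  have hs := Real.sq_sqrt hyz
  have hsnn := Real.sqrt_nonneg ((n:ℝ)^2 + 10*(n:ℝ) - 7)
  have hden : (0:ℝ) < 2 * ((n:ℝ) - 1) := by linarith
  have h1s : (n:ℝ) - 3 < Real.sqrt ((n:ℝ)^2 + 10*(n:ℝ) - 7) := by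
    nlinarith [sq_nonneg (Real.sqrt ((n:ℝ)^2 + 10*(n:ℝ) - 7) + ((n:ℝ) - 3))]
  have h2s : Real.sqrt ((n:ℝ)^2 + 10*(n:ℝ) - 7) < 3*(n:ℝ) - 1 := by
    nlinarith [sq_nonneg (Real.sqrt ((n:ℝ)^2 + 10*(n:ℝ) - 7) - (3*(n:ℝ) - 1)),
      sq_nonneg (Real.sqrt ((n:ℝ)^2 + 10*(n:ℝ) - 7) + 3*(n:ℝ) - 1)]
  have hpv : p * (2 * ((n:ℝ) - 1)) = (n:ℝ) + 1 + Real.sqrt ((n:ℝ)^2 + 10*(n:ℝ) - 7) := by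
    rw [hp, div_mul_cancel₀]; exact hden.ne'
  have hp1 : 1 < p := by nlinarith
  have hplt : ((n:ℝ) - 1) * p / 2 < (n:ℝ) := by nlinarith
  have hp0 : (0:ℝ) < p := by linarith
  have hpm1 : (0:ℝ) < p - 1 := by linarith
  -- positivity of the constants
  have hC0 : 0 < Czero n p C := by
    apply Real.rpow_pos_of_pos
    apply div_pos (by positivity)
    have h2 : (0:ℝ) < (2:ℝ) ^ ((n:ℝ) - 1 + ((n:ℝ) + 1) * p / 2) := Real.rpow_pos_of_pos two_pos _
    have h3 : (0:ℝ) < (3:ℝ) ^ ((n:ℝ) * p - 1) := Real.rpow_pos_of_pos three_pos _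
    positivity
  have hCp0 : 0 < Cpow n p := by
    have h2 : (0:ℝ) < (2:ℝ) ^ (((n:ℝ) + 1) * p) := Real.rpow_pos_of_pos two_pos _
    unfold Cpow; positivity
  have hCp1 : 1 ≤ Cpow n p := by
    have h2 : (1:ℝ) ≤ (2:ℝ) ^ (((n:ℝ) + 1) * p) :=
      Real.one_le_rpow one_le_two (by nlinarith)
    unfold Cpow; nlinarith
  have hBpos : 0 < (2:ℝ) ^ ((n:ℝ) - 2) * (3:ℝ) ^ (((n:ℝ) - 1) * p / 2) *
      ((n:ℝ) - ((n:ℝ) - 1) * p / 2) ^ p := by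
    have h2 : (0:ℝ) < (2:ℝ) ^ ((n:ℝ) - 2) := Real.rpow_pos_of_pos two_pos _
    have h3 : (0:ℝ) < (3:ℝ) ^ (((n:ℝ) - 1) * p / 2) := Real.rpow_pos_of_pos three_pos _
    have h4 : (0:ℝ) < ((n:ℝ) - ((n:ℝ) - 1) * p / 2) ^ p :=
      Real.rpow_pos_of_pos (by linarith) _
    positivity
  set B := (2:ℝ) ^ ((n:ℝ) - 2) * (3:ℝ) ^ (((n:ℝ) - 1) * p / 2) *
      ((n:ℝ) - ((n:ℝ) - 1) * p / 2) ^ p with hBdef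
  have hD : 0 < Dconst n p := by
    have h2 : (0:ℝ) < (2:ℝ) ^ (3*(n:ℝ) - 2 - 3*((n:ℝ) - 1) * p / 2) :=
      Real.rpow_pos_of_pos two_pos _
    unfold Dconst; positivity
  have hCC : (0:ℝ) < C ^ (p + 1) := Real.rpow_pos_of_pos hC _
  -- summability of k/p^k and S(j) ≤ S(∞)
  have hsum : Summable (fun k : ℕ => (k:ℝ) / p ^ k) := by
    have h := summable_pow_mul_geometric_of_norm_lt_one (R := ℝ) 1
      (r := p⁻¹) (by
        rw [norm_inv, Real.norm_eq_abs, abs_of_pos hp0]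
        exact inv_lt_one_of_one_lt₀ hp1)
    refine h.congr fun k => ?_
    rw [pow_one, inv_pow, div_eq_mul_inv]
  have hSle : ∀ j : ℕ, Ssum p j ≤ Sinf p := fun j =>
    Summable.sum_le_tsum (Finset.range j) (fun k _ => by positivity) hsum
  -- the quantity Q = (E/2)^{p/(p-1)}
  set Q := B * Real.exp 1 * Cpow n p ^ Sinf p / (Czero n p C * C ^ (p + 1)) with hQdef
  have hQpos : 0 < Q := by
    have h5 : (0:ℝ) < Cpow n p ^ Sinf p := Real.rpow_pos_of_pos hCp0 _
    positivity
  have hE2' : Econst n p C = 2 * Q ^ ((p-1)/p) := by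
    rw [hQdef, hBdef, Econst]
  have hE2 : Econst n p C / 2 = Q ^ ((p-1)/p) := by rw [hE2']; ring
  have hEQ : (Econst n p C / 2) ^ (p/(p-1)) = Q := by
    rw [hE2, ← Real.rpow_mul hQpos.le,
      show (p-1)/p * (p/(p-1)) = 1 by field_simp]
    exact Real.rpow_one Q
  have hEpos : 0 < Econst n p C := by
    have h := Real.rpow_pos_of_pos hQpos ((p-1)/p)
    rw [hE2']; linarith
  -- PART 1
  have main : ∀ ε : ℝ, 0 < ε → ∀ j : ℕ, 2 ≤ j → ∀ t : ℝ,
      (2 * (aseq j + 2) * R) ^ 2 ≤ t → t ≤ (2 * (aseq (j + 1) + 2) * R) ^ 2 →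
      Econst n p C ≤ ε ^ (p * (p - 1)) * Real.log t →
      Real.exp (p ^ (j - 1) - (j : ℝ) * Real.log 16 - Real.log (Czero n p C * Dconst n p)
          - 1 / (p - 1) * Real.log (Real.log (2 * (aseq (j + 1) + 2) * R)))
        ≤ Kcoef n p C ε j t := by
    intro ε hε j hj t ht1 ht2 hE
    have hεp2 : (0:ℝ) < ε ^ (p^2) := Real.rpow_pos_of_pos hε _
    have hC1 : 0 < Cone n p C ε := by
      unfold Cone; rw [← hBdef]; positivity
    set u := ε ^ (p * (p - 1)) with hudef
    have hu : 0 < u := Real.rpow_pos_of_pos hε _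
    have hlogt : Econst n p C / u ≤ Real.log t := by
      rw [div_le_iff₀ hu, mul_comm]; exact hE
    set x := 1 / 2 * Real.log t with hxdef
    have hxge : Econst n p C / 2 * u⁻¹ ≤ x := by
      rw [hxdef]
      have : Econst n p C / u / 2 ≤ Real.log t / 2 := by linarith only [hlogt]
      calc Econst n p C / 2 * u⁻¹ = Econst n p C / u / 2 := by ring
        _ ≤ Real.log t / 2 := this
        _ = 1/2 * Real.log t := by ring
    have hx : 0 < x := lt_of_lt_of_le (by positivity) hxge
    -- lower bound on x^{p/(p-1)}
    have hup : u ^ (p/(p-1)) = ε ^ (p^2) := by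
      rw [hudef, ← Real.rpow_mul hε.le,
        show p * (p - 1) * (p / (p - 1)) = p ^ 2 by field_simp]
    have hxp : Q * (ε ^ (p^2))⁻¹ ≤ x ^ (p/(p-1)) := by
      calc Q * (ε ^ (p^2))⁻¹ = (Econst n p C / 2 * u⁻¹) ^ (p/(p-1)) := by
            rw [Real.mul_rpow (by positivity) (by positivity), hEQ,
              Real.inv_rpow hu.le, hup]
          _ ≤ x ^ (p/(p-1)) := Real.rpow_le_rpow (by positivity) hxge (by positivity)
    -- L ≥ e
    have hfac : 0 < Czero n p C * Cone n p C ε * Cpow n p ^ (-Ssum p j) := by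
      have h5 : (0:ℝ) < Cpow n p ^ (-Ssum p j) := Real.rpow_pos_of_pos hCp0 _
      positivity
    have heq : Czero n p C * Cone n p C ε * Cpow n p ^ (-Ssum p j) * (Q * (ε ^ (p^2))⁻¹)
        = Real.exp 1 * Cpow n p ^ (Sinf p - Ssum p j) := by
      rw [Real.rpow_sub hCp0, Real.rpow_neg hCp0.le, hQdef]
      unfold Cone; rw [← hBdef]
      have hCpS : (0:ℝ) < Cpow n p ^ Ssum p j := Real.rpow_pos_of_pos hCp0 _
      field_simp
    have hL : Real.exp 1 ≤
        Czero n p C * Cone n p C ε * Cpow n p ^ (-Ssum p j) * x ^ (p/(p-1)) := by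
      have hge1 : 1 ≤ Cpow n p ^ (Sinf p - Ssum p j) :=
        Real.one_le_rpow hCp1 (sub_nonneg.2 (hSle j))
      calc Real.exp 1 = Real.exp 1 * 1 := (mul_one _).symm
        _ ≤ Real.exp 1 * Cpow n p ^ (Sinf p - Ssum p j) :=
            mul_le_mul_of_nonneg_left hge1 (Real.exp_pos 1).le
        _ = Czero n p C * Cone n p C ε * Cpow n p ^ (-Ssum p j) * (Q * (ε ^ (p^2))⁻¹) := heq.symm
        _ ≤ _ := mul_le_mul_of_nonneg_left hxp hfac.le
    have hLpos : 0 < Czero n p C * Cone n p C ε * Cpow n p ^ (-Ssum p j) * x ^ (p/(p-1)) := by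
      have := Real.rpow_pos_of_pos hx (p/(p-1)); positivity
    have hlogL : 1 ≤ Real.log (Czero n p C * Cone n p C ε * Cpow n p ^ (-Ssum p j)
        * x ^ (p/(p-1))) := (Real.le_log_iff_exp_le hLpos).2 hL
    have hsplit : Real.log (Czero n p C * Cone n p C ε * Cpow n p ^ (-Ssum p j)
        * x ^ (p/(p-1)))
        = Real.log (Czero n p C * Cone n p C ε * Cpow n p ^ (-Ssum p j))
          + (p/(p-1)) * Real.log x := by
      rw [Real.log_mul hfac.ne' (Real.rpow_pos_of_pos hx _).ne', Real.log_rpow hx]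
    rw [hsplit] at hlogL
    -- x ≤ log A'
    have hA'pos : 0 < 2 * (aseq (j+1) + 2) * R := by
      unfold aseq
      have h4 : (1:ℝ) ≤ 4 ^ ((j+1) - 1) := one_le_pow₀ (by norm_num)
      nlinarith only [h4, hR, h8R]
    have hApos : 0 < 2 * (aseq j + 2) * R := by
      unfold aseq
      have h4 : (1:ℝ) ≤ 4 ^ (j - 1) := one_le_pow₀ (by norm_num)
      nlinarith only [h4, hR, h8R]
    have ht0 : 0 < t := lt_of_lt_of_le (by positivity) ht1
    have hxle : x ≤ Real.log (2 * (aseq (j+1) + 2) * R) := by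
      have h1 : Real.log t ≤ Real.log ((2 * (aseq (j+1) + 2) * R) ^ 2) :=
        Real.log_le_log ht0 ht2
      rw [Real.log_pow] at h1
      rw [hxdef]; push_cast at h1 ⊢; linarith only [h1]
    -- the identity for Kcoef
    have hjj : p^(j-1) * p = p^j := by
      rw [← pow_succ]; congr 1; omega
    have hKeq : Kcoef n p C ε j t
        = Real.exp (p^(j-1) * Real.log (Czero n p C * Cone n p C ε * Cpow n p ^ (-Ssum p j))
          - Real.log (Czero n p C) - Real.log (Dconst n p) - (j:ℝ) * Real.log 16
          + ((p^j - 1)/(p-1)) * Real.log x) := by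
      unfold Kcoef
      rw [Cseq, if_neg (by omega), ← hxdef, Real.rpow_def_of_pos hx,
        show ((16:ℝ)^j * Dconst n p)
          = Real.exp ((j:ℝ) * Real.log 16 + Real.log (Dconst n p)) by
          rw [Real.exp_add, Real.exp_log hD, ← Real.log_pow,
            Real.exp_log (by positivity)],
        div_eq_mul_inv, ← Real.exp_neg, ← Real.exp_add, ← Real.exp_add]
      congr 1; ring
    rw [hKeq, Real.exp_le_exp, Real.log_mul hC0.ne' hD.ne']
    -- combine the inequalities
    have H1 : (p:ℝ)^(j-1) ≤ p^(j-1) * Real.log (Czero n p C * Cone n p C ε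
        * Cpow n p ^ (-Ssum p j)) + p^j/(p-1) * Real.log x := by
      have hmul := mul_le_mul_of_nonneg_left hlogL (pow_nonneg hp0.le (j-1))
      calc (p:ℝ)^(j-1) = p^(j-1) * 1 := (mul_one _).symm
        _ ≤ p^(j-1) * (Real.log (Czero n p C * Cone n p C ε * Cpow n p ^ (-Ssum p j))
            + (p/(p-1)) * Real.log x) := hmul
        _ = p^(j-1) * Real.log (Czero n p C * Cone n p C ε * Cpow n p ^ (-Ssum p j))
            + p^j/(p-1) * Real.log x := by rw [← hjj]; ring
    have H2 : 1/(p-1) * Real.log x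
        ≤ 1/(p-1) * Real.log (Real.log (2 * (aseq (j+1) + 2) * R)) :=
      mul_le_mul_of_nonneg_left (Real.log_le_log hx hxle) (by positivity)
    have H3 : ((p^j - 1)/(p-1)) * Real.log x
        = p^j/(p-1) * Real.log x - 1/(p-1) * Real.log x := by ring
    linarith only [H1, H2, H3]
  refine ⟨main, ?_⟩
  -- PART 2
  intro Kstar hKstar
  set c := Real.log 16 + 2/(p-1) with hcdef
  set d := Real.log (Czero n p C * Dconst n p) + Real.log (8*R)/(p-1) with hddef
  have hc0 : 0 < c := by
    have := Real.log_pos (by norm_num : (1:ℝ) < 16)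
    rw [hcdef]; positivity
  have hcd : 0 < c + |d| + 1 := by positivity
  set δ := (2*p*(c+|d|+1))⁻¹ with hδdef
  have hδ : 0 < δ := by positivity
  have limit : Filter.Tendsto (fun m : ℕ => (m:ℝ)^1 / p^m) Filter.atTop (nhds 0) :=
    tendsto_pow_const_div_const_pow_of_one_lt 1 hp1
  have hev : ∀ᶠ m : ℕ in Filter.atTop, (m:ℝ)^1 / p^m < δ :=
    limit.eventually_lt_const hδ
  obtain ⟨J₁, hJ₁⟩ := Filter.eventually_atTop.1 hev
  refine ⟨max (J₁ + 2) (⌈Real.log Kstar⌉₊ + 2), ?_⟩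
  intro ε hε j hjJ t ht1 ht2 hEc
  have hj2 : 2 ≤ j := le_trans (le_trans (by omega) (le_max_left _ _)) hjJ
  have key := main ε hε j hj2 t ht1 ht2 hEc
  refine le_trans ?_ key
  -- bound the exponent from below
  have haseq : aseq (j+1) = 3*(4:ℝ)^j - 1 := by unfold aseq; norm_num
  set M := Real.log (2 * (aseq (j+1) + 2) * R) with hMdef
  have h4j1 : (1:ℝ) ≤ 4^j := one_le_pow₀ (by norm_num)
  have hA'1 : 1 ≤ 2 * (aseq (j+1) + 2) * R := by rw [haseq]; nlinarith only [h4j1, hR, h8R]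
  have hM0 : 0 ≤ M := Real.log_nonneg hA'1
  have hMle : M ≤ Real.log (8*R) + 2*(j:ℝ) := by
    have hle : 2 * (aseq (j+1) + 2) * R ≤ 8*R*4^j := by rw [haseq]; nlinarith only [h4j1, hR]
    have h1 : M ≤ Real.log (8*R*4^j) := Real.log_le_log (by linarith) hle
    rw [Real.log_mul (by positivity) (by positivity), Real.log_pow] at h1
    have hlog4 : Real.log 4 ≤ 2 := by
      rw [show (4:ℝ) = 2^2 by norm_num, Real.log_pow]
      have := Real.log_le_sub_one_of_pos (by norm_num : (0:ℝ) < 2)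
      push_cast; linarith
    have : (j:ℝ) * Real.log 4 ≤ 2*(j:ℝ) := by
      have hj0 : (0:ℝ) ≤ (j:ℝ) := Nat.cast_nonneg j
      nlinarith only [hlog4, hj0]
    linarith
  have hlogM : Real.log M ≤ Real.log (8*R) + 2*(j:ℝ) :=
    (Real.log_le_self hM0).trans hMle
  -- p^{j-1} beats (c+|d|+1) j
  have hJ1j : J₁ ≤ j - 1 := by omega
  have hjm := hJ₁ (j-1) hJ1j
  have hcast : ((j-1:ℕ):ℝ) = (j:ℝ) - 1 := by
    rw [Nat.cast_sub (by omega)]; norm_num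
  rw [pow_one, hcast, div_lt_iff₀ (pow_pos hp0 _)] at hjm
  have hppos : (0:ℝ) < p^(j-1) := pow_pos hp0 _
  have hjR : (2:ℝ) ≤ (j:ℝ) := by exact_mod_cast hj2
  clear_value c d M
  have hpow : (c+|d|+1) * (j:ℝ) ≤ p^(j-1) := by
    have hδinv : δ * (2*p*(c+|d|+1)) = 1 := by
      rw [hδdef]; field_simp
    have e1 : 2*p*(c+|d|+1) * ((j:ℝ)-1) < 2*p*(c+|d|+1) * (δ * p^(j-1)) :=
      mul_lt_mul_of_pos_left hjm (by positivity)
    have e2 : 2*p*(c+|d|+1) * (δ * p^(j-1)) = p^(j-1) := by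
      linear_combination p^(j-1) * hδinv
    have h4 : (j:ℝ) ≤ 2*p*((j:ℝ)-1) := by nlinarith only [hjR, hp1]
    have e3 : (c+|d|+1) * (j:ℝ) ≤ (c+|d|+1) * (2*p*((j:ℝ)-1)) :=
      mul_le_mul_of_nonneg_left h4 hcd.le
    nlinarith only [e1, e2, e3]
  have hbound : (j:ℝ) ≤ p^(j-1) - (j:ℝ) * Real.log 16
      - Real.log (Czero n p C * Dconst n p) - 1/(p-1) * Real.log M := by
    have h2 : 1/(p-1) * Real.log M ≤ 1/(p-1) * (Real.log (8*R) + 2*(j:ℝ)) :=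
      mul_le_mul_of_nonneg_left hlogM (by positivity)
    have habs : d ≤ |d| := le_abs_self d
    have hcj : (j:ℝ) * Real.log 16 + 1/(p-1) * (Real.log (8*R) + 2*(j:ℝ))
        = c * (j:ℝ) + d - Real.log (Czero n p C * Dconst n p) := by
      rw [hcdef, hddef]; field_simp; ring
    have hdj : 0 ≤ |d| * ((j:ℝ) - 1) :=
      mul_nonneg (abs_nonneg d) (by linarith only [hjR])
    nlinarith only [hpow, h2, habs, hjR, hcj, hdj]
  have hKj : Real.log Kstar ≤ (j:ℝ) := by
    have h1 : Real.log Kstar ≤ (⌈Real.log Kstar⌉₊ : ℝ) := Nat.le_ceil _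
    have h2 : (⌈Real.log Kstar⌉₊ : ℝ) ≤ (j:ℝ) := by
      have : ⌈Real.log Kstar⌉₊ ≤ j := by omega
      exact_mod_cast this
    linarith
  calc Kstar = Real.exp (Real.log Kstar) := (Real.exp_log hKstar).symm
    _ ≤ _ := Real.exp_le_exp.2 (by linarith only [hbound, hKj])
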